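/- For a positive integer $\delta$, write $\delta = \delta_s^2 \delta_f$ with $\delta_f$ squarefree (this determines $\delta_s, \delta_f$ uniquely). Then for every positive integer $m$, every integer $k$, and every function $f : \mathbb{Z}_{>0} \to \mathbb{C}$: $\sum_{\delta \mid m} (m/\delta)^{k-1} f(\delta_s) = \sum_{\substack{l > 0 \\ l^2 \mid m}} \sigma_{k-1}(m/l^2) \sum_{l' \mid l} \mu(l') f(l/l')$, where $\sigma_{k-1}(n) = \sum_{d \mid n} d^{k-1}$ and $\mu$ is the Möbius function. -/

import Mathlib

open Finset ArithmeticFunction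

/-- Uniqueness of the square part. -/
private lemma sq_eq_of_sq_mul_squarefree {s a t b : ℕ} (ha : Squarefree a) (hb : Squarefree b)
    (hs : s ≠ 0) (ht : t ≠ 0) (h : s ^ 2 * a = t ^ 2 * b) : s = t := by
  have ha0 : a ≠ 0 := ha.ne_zero
  have hb0 : b ≠ 0 := hb.ne_zero
  refine Nat.factorization_inj hs ht ?_
  ext p
  have hfac : (s ^ 2 * a).factorization p = (t ^ 2 * b).factorization p := by rw [h]
  rw [Nat.factorization_mul (pow_ne_zero 2 hs) ha0, Nat.factorization_mul (pow_ne_zero 2 ht) hb0,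
    Nat.factorization_pow, Nat.factorization_pow] at hfac
  simp only [Finsupp.add_apply, Finsupp.smul_apply, smul_eq_mul] at hfac
  have h1 := ha.natFactorization_le_one p
  have h2 := hb.natFactorization_le_one p
  omega

private lemma sq_dvd_iff {s a : ℕ} (ha : Squarefree a) (hs : s ≠ 0) (t : ℕ) :
    t ^ 2 ∣ s ^ 2 * a ↔ t ∣ s := by
  constructor
  · intro h
    rcases eq_or_ne t 0 with rfl | ht
    · rw [pow_two, zero_mul, zero_dvd_iff, mul_eq_zero] at h
      exact absurd h (by simp [pow_ne_zero 2 hs, ha.ne_zero, hs])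
    · have hle := (Nat.factorization_le_iff_dvd (pow_ne_zero 2 ht)
        (mul_ne_zero (pow_ne_zero 2 hs) ha.ne_zero)).mpr h
      rw [← Nat.factorization_le_iff_dvd ht hs]
      intro p
      have hp := hle p
      rw [Nat.factorization_mul (pow_ne_zero 2 hs) ha.ne_zero, Nat.factorization_pow,
        Nat.factorization_pow] at hp
      simp only [Finsupp.add_apply, Finsupp.smul_apply, smul_eq_mul, Finsupp.coe_add,
        Pi.add_apply] at hp
      have h1 := ha.natFactorization_le_one p
      omega
  · intro h
    exact dvd_mul_of_dvd_left (pow_dvd_pow_of_dvd h 2) a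

private lemma sum_moebius_sq_dvd (n : ℕ) (hn : n ≠ 0) :
    ∑ t ∈ n.divisors.filter (fun t => t ^ 2 ∣ n), (moebius t : ℤ)
      = if Squarefree n then 1 else 0 := by
  obtain ⟨a, s, hsa, ha⟩ := Nat.sq_mul_squarefree n
  have hs : s ≠ 0 := by
    rintro rfl
    rw [← hsa] at hn
    simp at hn
  have hset : n.divisors.filter (fun t => t ^ 2 ∣ n) = s.divisors := by
    ext t
    simp only [mem_filter, Nat.mem_divisors]
    constructor
    · rintro ⟨⟨-, -⟩, h2⟩
      rw [← hsa] at h2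
      exact ⟨(sq_dvd_iff ha hs t).mp h2, hs⟩
    · rintro ⟨hts, -⟩
      have h2 : t ^ 2 ∣ n := by rw [← hsa]; exact (sq_dvd_iff ha hs t).mpr hts
      exact ⟨⟨dvd_trans (dvd_pow_self t two_ne_zero) h2, hn⟩, h2⟩
  have hms : ∑ t ∈ s.divisors, (moebius t : ℤ) = if s = 1 then 1 else 0 := by
    have h := coe_mul_zeta_apply (f := (moebius : ArithmeticFunction ℤ)) (x := s)
    rw [moebius_mul_coe_zeta] at h
    rw [← h, one_apply]
  have hiff : Squarefree n ↔ s = 1 := by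
    constructor
    · intro hsf
      have hdvd : s * s ∣ n := by
        rw [← hsa, ← pow_two]
        exact dvd_mul_right _ _
      exact Nat.isUnit_iff.mp (hsf s hdvd)
    · rintro rfl
      rw [← hsa, one_pow, one_mul]
      exact ha
  rw [hset, hms, if_congr hiff.symm rfl rfl]

private lemma sum_moebius_sq_dvd_complex (w : ℕ) (hw : w ≠ 0) :
    ∑ t ∈ w.divisors.filter (fun t => t ^ 2 ∣ w), ((moebius t : ℤ) : ℂ)
      = if Squarefree w then 1 else 0 := by
  have h := congrArg (fun z : ℤ => (z : ℂ)) (sum_moebius_sq_dvd w hw)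
  push_cast at h
  simpa using h

private lemma inner_swap (n : ℕ) (hn : n ≠ 0) (k : ℤ) :
    ∑ t ∈ n.divisors.filter (fun t => t ^ 2 ∣ n),
        ((moebius t : ℤ) : ℂ) * ∑ d ∈ (n / t ^ 2).divisors, ((d : ℕ) : ℂ) ^ (k - 1)
      = ∑ d ∈ n.divisors.filter (fun d => Squarefree (n / d)), ((d : ℕ) : ℂ) ^ (k - 1) := by
  have hR : ∀ d ∈ n.divisors, (if Squarefree (n / d) then ((d : ℕ) : ℂ) ^ (k - 1) else 0)
      = ∑ t ∈ (n / d).divisors.filter (fun t => t ^ 2 ∣ n / d),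
          ((moebius t : ℤ) : ℂ) * ((d : ℕ) : ℂ) ^ (k - 1) := by
    intro d hd
    obtain ⟨hdn, -⟩ := Nat.mem_divisors.mp hd
    have hnd : n / d ≠ 0 :=
      (Nat.div_pos (Nat.le_of_dvd (Nat.pos_of_ne_zero hn) hdn)
        (Nat.pos_of_mem_divisors hd)).ne'
    rw [← Finset.sum_mul, sum_moebius_sq_dvd_complex (n / d) hnd, ite_mul, one_mul, zero_mul]
  conv_rhs => rw [Finset.sum_filter, Finset.sum_congr rfl hR]
  simp_rw [Finset.mul_sum]
  rw [Finset.sum_sigma', Finset.sum_sigma']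
  refine Finset.sum_nbij' (fun p => ⟨p.2, p.1⟩) (fun p => ⟨p.2, p.1⟩) ?_ ?_ ?_ ?_ ?_
  · rintro ⟨t, d⟩ hp
    simp only [Finset.mem_sigma, Finset.mem_filter, Nat.mem_divisors] at hp ⊢
    obtain ⟨⟨⟨-, -⟩, ht2⟩, hd, -⟩ := hp
    have h1 : t ^ 2 * d ∣ n := (Nat.dvd_div_iff_mul_dvd ht2).mp hd
    have hdn : d ∣ n := dvd_trans (dvd_mul_left d (t ^ 2)) h1
    have h2 : t ^ 2 ∣ n / d := (Nat.dvd_div_iff_mul_dvd hdn).mpr (by rwa [mul_comm])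
    have hndne : n / d ≠ 0 :=
      (Nat.div_pos (Nat.le_of_dvd (Nat.pos_of_ne_zero hn) hdn)
        (Nat.pos_of_dvd_of_pos hdn (Nat.pos_of_ne_zero hn))).ne'
    exact ⟨⟨hdn, hn⟩, ⟨dvd_trans (dvd_pow_self t two_ne_zero) h2, hndne⟩, h2⟩
  · rintro ⟨d, t⟩ hp
    simp only [Finset.mem_sigma, Finset.mem_filter, Nat.mem_divisors] at hp ⊢
    obtain ⟨⟨hdn, -⟩, ⟨-, -⟩, ht2⟩ := hp
    have h1 : d * t ^ 2 ∣ n := (Nat.dvd_div_iff_mul_dvd hdn).mp ht2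
    have htn : t ^ 2 ∣ n := dvd_trans (dvd_mul_left (t ^ 2) d) h1
    have h2 : d ∣ n / t ^ 2 := (Nat.dvd_div_iff_mul_dvd htn).mpr (by rwa [mul_comm])
    have hntne : n / t ^ 2 ≠ 0 :=
      (Nat.div_pos (Nat.le_of_dvd (Nat.pos_of_ne_zero hn) htn)
        (Nat.pos_of_dvd_of_pos htn (Nat.pos_of_ne_zero hn))).ne'
    exact ⟨⟨⟨dvd_trans (dvd_pow_self t two_ne_zero) htn, hn⟩, htn⟩, h2, hntne⟩
  · rintro ⟨t, d⟩ _; rfl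
  · rintro ⟨d, t⟩ _; rfl
  · rintro ⟨t, d⟩ _; rfl

/-- Writing each positive integer `δ = δ_s^2 δ_f` with `δ_f` squarefree (so `sq δ = δ_s`),
for every `m > 0`, integer `k` and `f : ℕ → ℂ`:
`∑_{δ ∣ m} (m/δ)^{k-1} f(δ_s) = ∑_{l^2 ∣ m} σ_{k-1}(m/l^2) ∑_{l' ∣ l} μ(l') f(l/l')`. -/
theorem hecke_U_V_combinatorial_identity
    (sq : ℕ → ℕ) (hsq : ∀ δ : ℕ, 0 < δ → ∃ fpart : ℕ, Squarefree fpart ∧ δ = (sq δ) ^ 2 * fpart)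
    (m : ℕ) (hm : 0 < m) (k : ℤ) (f : ℕ → ℂ) :
    ∑ δ ∈ m.divisors, ((m / δ : ℕ) : ℂ) ^ (k - 1) * f (sq δ)
      = ∑ l ∈ m.divisors.filter (fun l => l ^ 2 ∣ m),
          (∑ d ∈ (m / l ^ 2).divisors, ((d : ℕ) : ℂ) ^ (k - 1)) *
            ∑ l' ∈ l.divisors, ((moebius l' : ℤ) : ℂ) * f (l / l') := by
  have hm0 : m ≠ 0 := hm.ne'
  have hLHS : (∑ δ ∈ m.divisors, ((m / δ : ℕ) : ℂ) ^ (k - 1) * f (sq δ))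
      = ∑ p ∈ (m.divisors.filter (fun s => s ^ 2 ∣ m)).sigma
          (fun s => (m / s ^ 2).divisors.filter (fun d => Squarefree (m / s ^ 2 / d))),
          ((p.2 : ℕ) : ℂ) ^ (k - 1) * f p.1 := by
    have hsingle : ∀ δ ∈ m.divisors,
        ((m / δ : ℕ) : ℂ) ^ (k - 1) * f (sq δ)
          = ∑ s ∈ δ.divisors.filter (fun s => s ^ 2 ∣ δ ∧ Squarefree (δ / s ^ 2)),
              ((m / δ : ℕ) : ℂ) ^ (k - 1) * f s := by
      intro δ hδ
      have hδ0 : 0 < δ := Nat.pos_of_mem_divisors hδ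
      obtain ⟨fp, hfp, hδeq⟩ := hsq δ hδ0
      have hsq0 : sq δ ≠ 0 := by
        rintro h
        rw [h] at hδeq
        simp only [ne_eq, OfNat.ofNat_ne_zero, not_false_eq_true, zero_pow, zero_mul] at hδeq
        omega
      have hd2 : (sq δ) ^ 2 ∣ δ := ⟨fp, hδeq⟩
      have hfilter : δ.divisors.filter (fun s => s ^ 2 ∣ δ ∧ Squarefree (δ / s ^ 2))
          = {sq δ} := by
        apply Finset.eq_singleton_iff_unique_mem.mpr
        constructor
        · simp only [Finset.mem_filter, Nat.mem_divisors]
          refine ⟨⟨dvd_trans (dvd_pow_self _ two_ne_zero) hd2, hδ0.ne'⟩, hd2, ?_⟩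
          have hq : δ / (sq δ) ^ 2 = fp :=
            Nat.div_eq_of_eq_mul_right (pow_pos (Nat.pos_of_ne_zero hsq0) 2) hδeq
          rw [hq]
          exact hfp
        · intro s hs
          simp only [Finset.mem_filter, Nat.mem_divisors] at hs
          obtain ⟨⟨-, -⟩, hs2, hsf⟩ := hs
          have hs0 : s ≠ 0 := by
            rintro rfl
            rw [zero_pow two_ne_zero, zero_dvd_iff] at hs2
            exact hδ0.ne' hs2
          refine sq_eq_of_sq_mul_squarefree hsf hfp hs0 hsq0 ?_
          rw [Nat.mul_div_cancel' hs2]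
          exact hδeq
      rw [hfilter, Finset.sum_singleton]
    rw [Finset.sum_congr rfl hsingle, Finset.sum_sigma']
    refine Finset.sum_nbij' (fun p => ⟨p.2, m / p.1⟩)
      (fun q => ⟨q.1 ^ 2 * (m / q.1 ^ 2 / q.2), q.1⟩) ?_ ?_ ?_ ?_ ?_
    · rintro ⟨δ, s⟩ hp
      simp only [Finset.mem_sigma, Finset.mem_filter, Nat.mem_divisors] at hp ⊢
      obtain ⟨⟨hδm, -⟩, ⟨hsδ, -⟩, hs2, hsf⟩ := hp
      have hδpos : 0 < δ := Nat.pos_of_dvd_of_pos hδm hm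
      have hspos : 0 < s := Nat.pos_of_dvd_of_pos hsδ hδpos
      have hs2m : s ^ 2 ∣ m := hs2.trans hδm
      have hdpos : 0 < m / δ := Nat.div_pos (Nat.le_of_dvd hm hδm) hδpos
      have hkey : m / s ^ 2 = (δ / s ^ 2) * (m / δ) := by
        refine Nat.div_eq_of_eq_mul_right (pow_pos hspos 2) ?_
        rw [← mul_assoc, Nat.mul_div_cancel' hs2]
        exact (Nat.mul_div_cancel' hδm).symm
      have hkey2 : m / s ^ 2 / (m / δ) = δ / s ^ 2 := by
        rw [hkey, Nat.mul_div_cancel _ hdpos]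
      have hnpos : 0 < m / s ^ 2 :=
        Nat.div_pos (Nat.le_of_dvd hm hs2m) (pow_pos hspos 2)
      refine ⟨⟨⟨hsδ.trans hδm, hm0⟩, hs2m⟩, ⟨?_, hnpos.ne'⟩, ?_⟩
      · rw [hkey]; exact dvd_mul_left _ _
      · rw [hkey2]; exact hsf
    · rintro ⟨s, d⟩ hq
      simp only [Finset.mem_sigma, Finset.mem_filter, Nat.mem_divisors] at hq ⊢
      obtain ⟨⟨⟨hsm, -⟩, hs2m⟩, ⟨hdn, hn0⟩, hsf⟩ := hq
      have hspos : 0 < s := Nat.pos_of_dvd_of_pos hsm hm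
      have hndpos : 0 < m / s ^ 2 / d :=
        Nat.div_pos (Nat.le_of_dvd (Nat.pos_of_ne_zero hn0) hdn)
          (Nat.pos_of_dvd_of_pos hdn (Nat.pos_of_ne_zero hn0))
      have hδm : s ^ 2 * (m / s ^ 2 / d) ∣ m := by
        have h1 : m / s ^ 2 / d ∣ m / s ^ 2 := Nat.div_dvd_of_dvd hdn
        exact dvd_trans (mul_dvd_mul_left _ h1) (dvd_of_eq (Nat.mul_div_cancel' hs2m))
      have hδpos : 0 < s ^ 2 * (m / s ^ 2 / d) := mul_pos (pow_pos hspos 2) hndpos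
      refine ⟨⟨hδm, hm0⟩,
        ⟨dvd_trans (dvd_pow_self s two_ne_zero) (dvd_mul_right _ _), hδpos.ne'⟩,
        dvd_mul_right _ _, ?_⟩
      rw [Nat.mul_div_cancel_left _ (pow_pos hspos 2)]
      exact hsf
    · rintro ⟨δ, s⟩ hp
      simp only [Finset.mem_sigma, Finset.mem_filter, Nat.mem_divisors] at hp
      obtain ⟨⟨hδm, -⟩, ⟨hsδ, -⟩, hs2, -⟩ := hp
      have hδpos : 0 < δ := Nat.pos_of_dvd_of_pos hδm hm
      have hspos : 0 < s := Nat.pos_of_dvd_of_pos hsδ hδpos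
      have hdpos : 0 < m / δ := Nat.div_pos (Nat.le_of_dvd hm hδm) hδpos
      have hkey : m / s ^ 2 = (δ / s ^ 2) * (m / δ) := by
        refine Nat.div_eq_of_eq_mul_right (pow_pos hspos 2) ?_
        rw [← mul_assoc, Nat.mul_div_cancel' hs2]
        exact (Nat.mul_div_cancel' hδm).symm
      have hkey2 : m / s ^ 2 / (m / δ) = δ / s ^ 2 := by
        rw [hkey, Nat.mul_div_cancel _ hdpos]
      have h : s ^ 2 * (m / s ^ 2 / (m / δ)) = δ := by
        rw [hkey2]; exact Nat.mul_div_cancel' hs2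
      exact congrArg (fun x => (⟨x, s⟩ : (_ : ℕ) × ℕ)) h
    · rintro ⟨s, d⟩ hq
      simp only [Finset.mem_sigma, Finset.mem_filter, Nat.mem_divisors] at hq
      obtain ⟨⟨⟨hsm, -⟩, hs2m⟩, ⟨hdn, hn0⟩, -⟩ := hq
      have hspos : 0 < s := Nat.pos_of_dvd_of_pos hsm hm
      have hndpos : 0 < m / s ^ 2 / d :=
        Nat.div_pos (Nat.le_of_dvd (Nat.pos_of_ne_zero hn0) hdn)
          (Nat.pos_of_dvd_of_pos hdn (Nat.pos_of_ne_zero hn0))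
      have hδpos : 0 < s ^ 2 * (m / s ^ 2 / d) := mul_pos (pow_pos hspos 2) hndpos
      have hδd : (s ^ 2 * (m / s ^ 2 / d)) * d = m := by
        rw [mul_assoc, Nat.div_mul_cancel hdn]
        exact Nat.mul_div_cancel' hs2m
      have h : m / (s ^ 2 * (m / s ^ 2 / d)) = d :=
        Nat.div_eq_of_eq_mul_right hδpos hδd.symm
      exact congrArg (fun x => (⟨s, x⟩ : (_ : ℕ) × ℕ)) h
    · rintro ⟨δ, s⟩ _
      rfl
  rw [hLHS]
  have hRHS : (∑ l ∈ m.divisors.filter (fun l => l ^ 2 ∣ m),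
          (∑ d ∈ (m / l ^ 2).divisors, ((d : ℕ) : ℂ) ^ (k - 1)) *
            ∑ l' ∈ l.divisors, ((moebius l' : ℤ) : ℂ) * f (l / l'))
      = ∑ p ∈ (m.divisors.filter (fun s => s ^ 2 ∣ m)).sigma
          (fun s => (m / s ^ 2).divisors.filter (fun d => Squarefree (m / s ^ 2 / d))),
          ((p.2 : ℕ) : ℂ) ^ (k - 1) * f p.1 := by
    simp_rw [Finset.mul_sum]
    rw [Finset.sum_sigma']
    have hstep : ∑ p ∈ (m.divisors.filter (fun l => l ^ 2 ∣ m)).sigma (fun l => l.divisors),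
        (∑ d ∈ (m / p.1 ^ 2).divisors, ((d : ℕ) : ℂ) ^ (k - 1)) *
          (((moebius p.2 : ℤ) : ℂ) * f (p.1 / p.2))
        = ∑ q ∈ (m.divisors.filter (fun s => s ^ 2 ∣ m)).sigma
            (fun s => (m / s ^ 2).divisors.filter (fun t => t ^ 2 ∣ m / s ^ 2)),
          (∑ d ∈ (m / q.1 ^ 2 / q.2 ^ 2).divisors, ((d : ℕ) : ℂ) ^ (k - 1)) *
            (((moebius q.2 : ℤ) : ℂ) * f q.1) := by
      refine Finset.sum_nbij' (fun p => ⟨p.1 / p.2, p.2⟩) (fun q => ⟨q.1 * q.2, q.2⟩)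
        ?_ ?_ ?_ ?_ ?_
      · rintro ⟨l, l'⟩ hp
        simp only [Finset.mem_sigma, Finset.mem_filter, Nat.mem_divisors] at hp ⊢
        obtain ⟨⟨⟨hlm, -⟩, hl2m⟩, hl'l, hl0⟩ := hp
        have hlpos : 0 < l := Nat.pos_of_ne_zero hl0
        have hsl : l / l' ∣ l := Nat.div_dvd_of_dvd hl'l
        have hs2 : (l / l') ^ 2 ∣ m := (pow_dvd_pow_of_dvd hsl 2).trans hl2m
        have hmul : (l / l') * l' = l := Nat.div_mul_cancel hl'l
        have ht2 : l' ^ 2 ∣ m / (l / l') ^ 2 := by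
          refine (Nat.dvd_div_iff_mul_dvd hs2).mpr ?_
          rw [← mul_pow, hmul]
          exact hl2m
        have hne : m / (l / l') ^ 2 ≠ 0 := by
          have hspos : 0 < l / l' :=
            Nat.div_pos (Nat.le_of_dvd hlpos hl'l) (Nat.pos_of_dvd_of_pos hl'l hlpos)
          exact (Nat.div_pos (Nat.le_of_dvd hm hs2) (pow_pos hspos 2)).ne'
        exact ⟨⟨⟨hsl.trans hlm, hm0⟩, hs2⟩,
          ⟨dvd_trans (dvd_pow_self l' two_ne_zero) ht2, hne⟩, ht2⟩
      · rintro ⟨s, t⟩ hq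
        simp only [Finset.mem_sigma, Finset.mem_filter, Nat.mem_divisors] at hq ⊢
        obtain ⟨⟨⟨hsm, -⟩, hs2m⟩, ⟨htn, hn0⟩, ht2⟩ := hq
        have hspos : 0 < s := Nat.pos_of_dvd_of_pos hsm hm
        have htpos : 0 < t :=
          Nat.pos_of_dvd_of_pos htn (Nat.pos_of_ne_zero hn0)
        have hl2 : (s * t) ^ 2 ∣ m := by
          rw [mul_pow]
          exact (Nat.dvd_div_iff_mul_dvd hs2m).mp ht2
        exact ⟨⟨⟨dvd_trans (dvd_pow_self _ two_ne_zero) hl2, hm0⟩, hl2⟩,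
          dvd_mul_left t s, (mul_pos hspos htpos).ne'⟩
      · rintro ⟨l, l'⟩ hp
        simp only [Finset.mem_sigma, Finset.mem_filter, Nat.mem_divisors] at hp
        obtain ⟨-, hl'l, -⟩ := hp
        exact congrArg (fun x => (⟨x, l'⟩ : (_ : ℕ) × ℕ)) (Nat.div_mul_cancel hl'l)
      · rintro ⟨s, t⟩ hq
        simp only [Finset.mem_sigma, Finset.mem_filter, Nat.mem_divisors] at hq
        obtain ⟨-, ⟨htn, hn0⟩, -⟩ := hq
        have htpos : 0 < t := Nat.pos_of_dvd_of_pos htn (Nat.pos_of_ne_zero hn0)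
        exact congrArg (fun x => (⟨x, t⟩ : (_ : ℕ) × ℕ)) (Nat.mul_div_cancel _ htpos)
      · rintro ⟨l, l'⟩ hp
        simp only [Finset.mem_sigma, Finset.mem_filter, Nat.mem_divisors] at hp
        obtain ⟨-, hl'l, -⟩ := hp
        have hmul : (l / l') * l' = l := Nat.div_mul_cancel hl'l
        have hdiv : m / (l / l') ^ 2 / l' ^ 2 = m / l ^ 2 := by
          rw [Nat.div_div_eq_div_mul, ← mul_pow, hmul]
        rw [hdiv]
    rw [hstep, Finset.sum_sigma, Finset.sum_sigma]
    refine Finset.sum_congr rfl fun s hs => ?_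
    simp only [Finset.mem_filter, Nat.mem_divisors] at hs
    obtain ⟨⟨hsm, -⟩, hs2m⟩ := hs
    have hn0 : m / s ^ 2 ≠ 0 :=
      (Nat.div_pos (Nat.le_of_dvd hm hs2m)
        (pow_pos (Nat.pos_of_dvd_of_pos hsm hm) 2)).ne'
    calc ∑ t ∈ (m / s ^ 2).divisors.filter (fun t => t ^ 2 ∣ m / s ^ 2),
          (∑ d ∈ (m / s ^ 2 / t ^ 2).divisors, ((d : ℕ) : ℂ) ^ (k - 1)) *
            (((moebius t : ℤ) : ℂ) * f s)
        = (∑ t ∈ (m / s ^ 2).divisors.filter (fun t => t ^ 2 ∣ m / s ^ 2),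
            ((moebius t : ℤ) : ℂ) *
              ∑ d ∈ (m / s ^ 2 / t ^ 2).divisors, ((d : ℕ) : ℂ) ^ (k - 1)) * f s := by
          rw [Finset.sum_mul]
          exact Finset.sum_congr rfl fun t _ => by ring
      _ = (∑ d ∈ (m / s ^ 2).divisors.filter (fun d => Squarefree (m / s ^ 2 / d)),
            ((d : ℕ) : ℂ) ^ (k - 1)) * f s := by rw [inner_swap _ hn0 k]
      _ = ∑ d ∈ (m / s ^ 2).divisors.filter (fun d => Squarefree (m / s ^ 2 / d)),
            ((d : ℕ) : ℂ) ^ (k - 1) * f s := by rw [Finset.sum_mul]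
  exact hRHS.symm
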